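/- Let H₁ and H₂ be norms on ℝⁿ with H₂ ≤ H₁ pointwise, A ∈ ℝ^{m×n}, b ∈ ℝ^m, μ > 0, and suppose H₁(z) > H₂(z) whenever ‖z‖₀ ≥ r_A + 1, where r_A is the largest integer i such that any i columns of A are linearly independent. Then J(z) := (1/2)‖Az − b‖² + μ(H₁(z) − H₂(z)) is coercive: liminf_{H₂(z)→∞} J(z)/H₂(z) > 0. -/

import Mathlib

open Filter

lemma normlike_zero {n : ℕ} (H : (Fin n → ℝ) → ℝ)
    (hsmul : ∀ (a : ℝ) x, H (a • x) = |a| * H x) : H 0 = 0 := by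
  have := hsmul 0 0
  simpa using this

lemma normlike_sum {n : ℕ} (H : (Fin n → ℝ) → ℝ)
    (hadd : ∀ x y, H (x + y) ≤ H x + H y)
    (hsmul : ∀ (a : ℝ) x, H (a • x) = |a| * H x)
    {ι : Type*} (s : Finset ι) (f : ι → Fin n → ℝ) :
    H (∑ i ∈ s, f i) ≤ ∑ i ∈ s, H (f i) := by
  classical
  induction s using Finset.induction_on with
  | empty => simp [normlike_zero H hsmul]
  | insert _ _ hx ih =>
    rename_i a s
    rw [Finset.sum_insert hx, Finset.sum_insert hx]
    exact le_trans (hadd _ _) (by linarith)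

lemma normlike_bound {n : ℕ} (H : (Fin n → ℝ) → ℝ)
    (hadd : ∀ x y, H (x + y) ≤ H x + H y)
    (hsmul : ∀ (a : ℝ) x, H (a • x) = |a| * H x) :
    ∃ C : ℝ, 0 < C ∧ ∀ z, H z ≤ C * ‖z‖ := by
  classical
  set C : ℝ := 1 + ∑ i, H (Pi.single i 1) with hC
  have hnn : ∀ x, 0 ≤ H x := by
    intro x
    have h := hadd x (-x)
    have hneg : H (-x) = H x := by
      have := hsmul (-1) x; simpa using this
    have h0 : H 0 = 0 := normlike_zero H hsmul
    simp at h
    rw [hneg] at h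
    rw [h0] at h
    linarith
  have hCpos : 0 < C := by
    have : 0 ≤ ∑ i, H (Pi.single i 1) := Finset.sum_nonneg fun i _ => hnn _
    simp [hC]; linarith
  refine ⟨C, hCpos, fun z => ?_⟩
  have hz : z = ∑ i, (z i) • (Pi.single i 1 : Fin n → ℝ) := by
    ext j
    simp [Pi.single_apply, Finset.sum_apply, mul_comm]
  calc H z = H (∑ i, (z i) • (Pi.single i 1 : Fin n → ℝ)) := by rw [← hz]
    _ ≤ ∑ i, H ((z i) • (Pi.single i 1 : Fin n → ℝ)) := normlike_sum H hadd hsmul _ _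
    _ = ∑ i, |z i| * H (Pi.single i 1) := by simp [hsmul]
    _ ≤ ∑ i, ‖z‖ * H (Pi.single i 1) := by
        refine Finset.sum_le_sum fun i _ => ?_
        exact mul_le_mul_of_nonneg_right (by simpa using norm_le_pi_norm z i) (hnn _)
    _ = (∑ i, H (Pi.single i 1)) * ‖z‖ := by rw [← Finset.mul_sum, mul_comm]
    _ ≤ C * ‖z‖ := by
        refine mul_le_mul_of_nonneg_right (by simp [hC]) (norm_nonneg z)

lemma normlike_continuous {n : ℕ} (H : (Fin n → ℝ) → ℝ)
    (hadd : ∀ x y, H (x + y) ≤ H x + H y)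
    (hsmul : ∀ (a : ℝ) x, H (a • x) = |a| * H x) :
    Continuous H := by
  obtain ⟨C, hCpos, hC⟩ := normlike_bound H hadd hsmul
  have key : ∀ x y, dist (H x) (H y) ≤ C * dist x y := by
    intro x y
    have hneg : ∀ w, H (-w) = H w := fun w => by simpa using hsmul (-1) w
    have h1 : H x - H y ≤ H (x - y) := by
      have := hadd (x - y) y; simp at this; linarith
    have h2 : H y - H x ≤ H (x - y) := by
      have := hadd (y - x) x; simp at this
      have : H y ≤ H (y - x) + H x := by linarith
      have e : H (y - x) = H (x - y) := by rw [← hneg (x - y)]; ring_nf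
      linarith
    have : |H x - H y| ≤ H (x - y) := abs_le.2 ⟨by linarith, h1⟩
    calc dist (H x) (H y) = |H x - H y| := Real.dist_eq _ _
      _ ≤ H (x - y) := this
      _ ≤ C * ‖x - y‖ := hC _
      _ = C * dist x y := by rw [dist_eq_norm]
  exact (LipschitzWith.of_dist_le_mul (K := ⟨C, hCpos.le⟩) (by exact_mod_cast key)).continuous


/-- Let H₁, H₂ be norms on ℝⁿ with H₂ ≤ H₁, and suppose H₁(z) > H₂(z) whenever
‖z‖₀ ≥ r_A + 1, where any r_A columns of A are linearly independent (r_A is the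
largest such integer). Then J(z) = ½‖Az − b‖² + μ(H₁(z) − H₂(z)) satisfies
liminf_{H₂(z)→∞} J(z)/H₂(z) > 0. -/
theorem stmt13 {m n : ℕ} (A : Matrix (Fin m) (Fin n) ℝ) (b : Fin m → ℝ) (μ : ℝ) (hμ : 0 < μ)
    (H₁ H₂ : (Fin n → ℝ) → ℝ)
    -- H₁ is a norm
    (hH₁add : ∀ x y, H₁ (x + y) ≤ H₁ x + H₁ y)
    (hH₁smul : ∀ (a : ℝ) x, H₁ (a • x) = |a| * H₁ x)
    (hH₁zero : ∀ x, H₁ x = 0 ↔ x = 0)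
    -- H₂ is a norm
    (hH₂add : ∀ x y, H₂ (x + y) ≤ H₂ x + H₂ y)
    (hH₂smul : ∀ (a : ℝ) x, H₂ (a • x) = |a| * H₂ x)
    (hH₂zero : ∀ x, H₂ x = 0 ↔ x = 0)
    -- H₂ ≤ H₁ pointwise
    (hle : ∀ z, H₂ z ≤ H₁ z)
    -- r_A is the largest integer i such that any i columns of A are linearly independent
    (rA : ℕ)
    (hrA : IsGreatest {i : ℕ | i ≤ n ∧ ∀ s : Finset (Fin n), s.card = i →
      LinearIndependent ℝ (fun j : {j // j ∈ s} => fun k => A k j)} rA)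
    -- H₁(z) > H₂(z) whenever ‖z‖₀ ≥ r_A + 1
    (hgt : ∀ z : Fin n → ℝ, rA + 1 ≤ (Finset.univ.filter fun i => z i ≠ 0).card →
      H₂ z < H₁ z)
    (J : (Fin n → ℝ) → ℝ)
    (hJ : ∀ z, J z = (1 / 2) * (∑ i, (A.mulVec z i - b i) ^ 2) + μ * (H₁ z - H₂ z)) :
    0 < liminf (fun z => ((J z / H₂ z : ℝ) : EReal)) (Filter.comap H₂ Filter.atTop) := by
  classical
  -- basic facts
  have hH₂zero0 : H₂ 0 = 0 := (hH₂zero 0).2 rfl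
  by_cases hn : n = 0
  · -- degenerate case: the filter is ⊥
    subst hn
    have hbot : (Filter.comap H₂ Filter.atTop) = ⊥ := by
      rw [← Filter.empty_mem_iff_bot]
      refine Filter.mem_comap.2 ⟨Set.Ici 1, Filter.mem_atTop 1, ?_⟩
      intro z hz
      have h1 : (1:ℝ) ≤ H₂ z := hz
      rw [Subsingleton.elim z 0, hH₂zero0] at h1
      exact absurd h1 (by norm_num)
    rw [hbot, Filter.liminf_bot]
    exact lt_of_lt_of_le (by norm_num : (0:EReal) < 1) le_top
  -- main case
  haveI : Nonempty (Fin n) := ⟨⟨0, Nat.pos_of_ne_zero hn⟩⟩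
  have hH₂nonneg : ∀ x, 0 ≤ H₂ x := by
    intro x
    have h := hH₂add x (-x)
    have hneg : H₂ (-x) = H₂ x := by simpa using hH₂smul (-1) x
    simp [hneg, hH₂zero0] at h
    linarith
  obtain ⟨G, hG⟩ : ∃ G : (Fin n → ℝ) → ℝ, G = fun u => ∑ i, (A.mulVec u i) ^ 2 := ⟨_, rfl⟩
  have hGapp : ∀ u, G u = ∑ i, (A.mulVec u i) ^ 2 := fun u => by rw [hG]
  have hGnonneg : ∀ u, 0 ≤ G u := fun u => by
    rw [hGapp]; exact Finset.sum_nonneg fun i _ => sq_nonneg _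
  have hGcont : Continuous G := by
    rw [hG]
    simp only [Matrix.mulVec, dotProduct]
    fun_prop
  obtain ⟨F, hF⟩ : ∃ F : (Fin n → ℝ) → ℝ, F = fun u => μ * (H₁ u - H₂ u) + G u := ⟨_, rfl⟩
  have hFapp : ∀ u, F u = μ * (H₁ u - H₂ u) + G u := fun u => by rw [hF]
  have hFcont : Continuous F := by
    have h1 := normlike_continuous H₁ hH₁add hH₁smul
    have h2 := normlike_continuous H₂ hH₂add hH₂smul
    rw [hF]
    fun_prop
  have hdiffnonneg : ∀ u, 0 ≤ μ * (H₁ u - H₂ u) := fun u =>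
    mul_nonneg hμ.le (by linarith [hle u])
  -- positivity of F on the unit sphere
  have hFpos : ∀ u : Fin n → ℝ, ‖u‖ = 1 → 0 < F u := by
    intro u hu
    have hune : u ≠ 0 := fun h => by simp [h] at hu
    rcases lt_or_ge 0 (μ * (H₁ u - H₂ u)) with h | h
    · rw [hFapp]
      exact lt_of_lt_of_le h (le_add_of_nonneg_right (hGnonneg u))
    · -- H₁ u = H₂ u, so support is small, so A u ≠ 0
      have heq : H₁ u = H₂ u := by
        have := hdiffnonneg u
        have h' : μ * (H₁ u - H₂ u) = 0 := le_antisymm h this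
        have := hle u
        rcases mul_eq_zero.1 h' with h'' | h''
        · exact absurd h'' (ne_of_gt hμ)
        · linarith
      have hcard : (Finset.univ.filter fun i => u i ≠ 0).card ≤ rA := by
        by_contra hc
        push_neg at hc
        exact absurd heq (ne_of_gt (hgt u hc))
      obtain ⟨s, hsub, hscard⟩ := Finset.exists_superset_card_eq hcard
        (by simpa [Fintype.card_fin] using hrA.1.1)
      have hLI := hrA.1.2 s hscard
      have hAu : A.mulVec u ≠ 0 := by
        intro hAu0
        have hsum : (∑ j : {j // j ∈ s}, u j • (fun k => A k j.1)) = (0 : Fin m → ℝ) := by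
          funext k
          have e1 : (∑ j : {j // j ∈ s}, u j • (fun k => A k j.1)) k
              = ∑ j ∈ s, u j * A k j := by
            rw [Finset.sum_apply]
            rw [← Finset.sum_attach s (fun j => u j * A k j)]
            rfl
          rw [e1]
          have e2 : ∑ j ∈ s, u j * A k j = ∑ j, u j * A k j := by
            refine Finset.sum_subset (Finset.subset_univ s) ?_
            intro j _ hj
            have : u j = 0 := by
              by_contra hne
              exact hj (hsub (Finset.mem_filter.2 ⟨Finset.mem_univ j, hne⟩))
            simp [this]
          rw [e2]
          simp only [Pi.zero_apply]
          have hk : A.mulVec u k = 0 := by rw [hAu0]; rfl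
          rw [← hk]
          simp [Matrix.mulVec, dotProduct, mul_comm]
        have hz := (Fintype.linearIndependent_iff.1 hLI) (fun j => u j) hsum
        apply hune
        funext j
        by_cases hjs : j ∈ s
        · exact hz ⟨j, hjs⟩
        · by_contra hne
          exact hjs (hsub (Finset.mem_filter.2 ⟨Finset.mem_univ j, hne⟩))
      have hGpos : 0 < G u := by
        obtain ⟨i, hi⟩ := Function.ne_iff.1 hAu
        simp only [Pi.zero_apply] at hi
        rw [hGapp]
        exact Finset.sum_pos' (fun j _ => sq_nonneg _)
          ⟨i, Finset.mem_univ i, by positivity⟩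
      have := hdiffnonneg u
      rw [hFapp]
      linarith
  -- minimum of F on sphere
  have hsne : (Metric.sphere (0 : Fin n → ℝ) 1).Nonempty :=
    NormedSpace.sphere_nonempty.2 zero_le_one
  obtain ⟨u₀, hu₀mem, hu₀minOn⟩ := (isCompact_sphere (0 : Fin n → ℝ) 1).exists_isMinOn
    hsne hFcont.continuousOn
  obtain ⟨δ, hδdef⟩ : ∃ δ : ℝ, δ = F u₀ := ⟨_, rfl⟩
  have hu₀min : ∀ v, ‖v‖ = 1 → δ ≤ F v := fun v hv => by
    rw [hδdef]; exact hu₀minOn (mem_sphere_zero_iff_norm.2 hv)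
  have hδpos : 0 < δ := by
    rw [hδdef]; exact hFpos u₀ (mem_sphere_zero_iff_norm.1 hu₀mem)
  obtain ⟨C, hCpos, hCbound⟩ := normlike_bound H₂ hH₂add hH₂smul
  obtain ⟨B, hBdef⟩ : ∃ B : ℝ, B = ∑ i, (b i) ^ 2 := ⟨_, rfl⟩
  have hBnonneg : 0 ≤ B := by rw [hBdef]; exact Finset.sum_nonneg fun i _ => sq_nonneg _
  obtain ⟨T, hTdef⟩ : ∃ T : ℝ, T = 8 + 8 * B / δ := ⟨_, rfl⟩
  have hT8 : 8 ≤ T := by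
    rw [hTdef]
    have : 0 ≤ 8 * B / δ := by positivity
    linarith
  -- the key pointwise bound
  have key : ∀ z, C * T ≤ H₂ z → δ / (2 * C) ≤ J z / H₂ z := by
    intro z hz
    obtain ⟨t, htdef⟩ : ∃ t : ℝ, t = ‖z‖ := ⟨_, rfl⟩
    have hH₂le : H₂ z ≤ C * t := by rw [htdef]; exact hCbound z
    have hTt : T ≤ t := by
      have : C * T ≤ C * t := le_trans hz hH₂le
      exact le_of_mul_le_mul_left this hCpos
    have ht8 : (8 : ℝ) ≤ t := le_trans hT8 hTt
    have htpos : 0 < t := by linarith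
    obtain ⟨u, hudef⟩ : ∃ u : Fin n → ℝ, u = t⁻¹ • z := ⟨_, rfl⟩
    have hunorm : ‖u‖ = 1 := by
      rw [hudef, norm_smul, norm_inv, Real.norm_eq_abs, abs_of_pos htpos, ← htdef]
      field_simp
    have hδF : δ ≤ F u := hu₀min u hunorm
    have hzu : z = t • u := by
      rw [hudef, smul_smul]
      field_simp
      rw [one_smul]
    -- homogeneity
    have hH₁u : H₁ z = t * H₁ u := by
      conv_lhs => rw [hzu]
      rw [hH₁smul, abs_of_pos htpos]
    have hH₂u : H₂ z = t * H₂ u := by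
      conv_lhs => rw [hzu]
      rw [hH₂smul, abs_of_pos htpos]
    have hmv : ∀ i, A.mulVec z i = t * A.mulVec u i := by
      intro i
      conv_lhs => rw [hzu]
      rw [Matrix.mulVec_smul]
      rfl
    have hH₂pos : 0 < H₂ z := lt_of_lt_of_le (by positivity) hz
    -- main lower bound: J z ≥ t * δ / 2
    have hJlow : t * (δ / 2) ≤ J z := by
      have hquadnn : 0 ≤ ∑ i, (A.mulVec z i - b i) ^ 2 :=
        Finset.sum_nonneg fun i _ => sq_nonneg _
      have hdiffz : 0 ≤ μ * (H₁ z - H₂ z) := hdiffnonneg z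
      rcases le_or_gt (δ / 2) (μ * (H₁ u - H₂ u)) with hc | hc
      · -- norm gap term dominates
        have heq : μ * (H₁ z - H₂ z) = t * (μ * (H₁ u - H₂ u)) := by
          rw [hH₁u, hH₂u]; ring
        rw [hJ z, heq]
        have : t * (δ / 2) ≤ t * (μ * (H₁ u - H₂ u)) :=
          mul_le_mul_of_nonneg_left hc htpos.le
        linarith
      · -- quadratic term dominates
        have hGu : δ / 2 ≤ G u := by
          have hfu := hFapp u
          linarith [hδF]
        have hQ : t ^ 2 * (δ / 2) ≤ ∑ i, (A.mulVec z i) ^ 2 := by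
          have e : (∑ i, (A.mulVec z i) ^ 2) = t ^ 2 * G u := by
            rw [hGapp, Finset.mul_sum]
            refine Finset.sum_congr rfl fun i _ => ?_
            rw [hmv i]; ring
          rw [e]
          exact mul_le_mul_of_nonneg_left hGu (by positivity)
        have hsumlow : (∑ i, (A.mulVec z i) ^ 2) / 2 - B ≤ ∑ i, (A.mulVec z i - b i) ^ 2 := by
          rw [hBdef, Finset.sum_div, ← Finset.sum_sub_distrib]
          refine Finset.sum_le_sum fun i _ => ?_
          nlinarith [sq_nonneg (A.mulVec z i - 2 * b i)]
        have htδ : 8 * δ + 8 * B ≤ t * δ := by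
          have h1 : T * δ ≤ t * δ := mul_le_mul_of_nonneg_right hTt hδpos.le
          have h2 : T * δ = 8 * δ + 8 * B := by
            rw [hTdef]; field_simp
          linarith
        have harith : t * (δ / 2) ≤ (1 / 2) * (t ^ 2 * (δ / 2) / 2 - B) := by
          nlinarith [mul_le_mul_of_nonneg_left htδ htpos.le,
            mul_nonneg (by linarith : (0:ℝ) ≤ t - 8) hBnonneg,
            mul_pos htpos hδpos]
        rw [hJ z]
        have h3 : t ^ 2 * (δ / 2) / 2 - B ≤ ∑ i, (A.mulVec z i - b i) ^ 2 := by
          linarith [hsumlow, hQ]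
        linarith
    -- conclude
    rw [le_div_iff₀ hH₂pos]
    calc δ / (2 * C) * H₂ z ≤ δ / (2 * C) * (C * t) := by
          apply mul_le_mul_of_nonneg_left hH₂le (by positivity)
      _ = t * (δ / 2) := by field_simp
      _ ≤ J z := hJlow
  -- assemble
  have hev : ∀ᶠ z in Filter.comap H₂ Filter.atTop,
      ((δ / (2 * C) : ℝ) : EReal) ≤ ((J z / H₂ z : ℝ) : EReal) := by
    have hmem : H₂ ⁻¹' Set.Ici (C * T) ∈ Filter.comap H₂ Filter.atTop :=
      Filter.preimage_mem_comap (Filter.mem_atTop (C * T))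
    filter_upwards [hmem] with z hz
    exact EReal.coe_le_coe_iff.2 (key z hz)
  have hlim : ((δ / (2 * C) : ℝ) : EReal) ≤
      liminf (fun z => ((J z / H₂ z : ℝ) : EReal)) (Filter.comap H₂ Filter.atTop) :=
    Filter.le_liminf_of_le (by isBoundedDefault) hev
  refine lt_of_lt_of_le ?_ hlim
  have : (0 : ℝ) < δ / (2 * C) := by positivity
  exact_mod_cast this
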